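/- arXiv:2411.03167 — 3 statements merged into one kernel-verified Lean document; each statement's English description precedes it below -/
import Mathlib

section
/- Let (R,m) be a Noetherian local ring of characteristic p > 0 and suppose J is an ideal with J^[q₀] ⊆ τ_par(R) for some q₀ = p^{e₀}, where τ_par(R) is the parameter test ideal. Then for every parameter ideal q of R, J · q^* ⊆ q^F. In particular, √(τ_par(R)) annihilates q^*/q^F for every parameter ideal q. -/
/-!
Definitions of characteristic-`p` notions (Frobenius powers, Frobenius/tight closure,
parameter ideals, F-rationality, F-injectivity, excellence, ...) used to state results
of "A characterization of F-rationality" (products of parameter ideals & tight closure).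
-/

open IsLocalRing

universe u

section BasicDefs

variable (A : Type u) [CommRing A] (p : ℕ)

/-- The Frobenius power `I^[q]` of an ideal: the ideal generated by `q`-th powers
of elements of `I`. -/
def fpow (I : Ideal A) (q : ℕ) : Ideal A :=
  Ideal.span ((fun x => x ^ q) '' (I : Set A))

/-- `A°`: the complement of the union of the minimal primes of `A`. -/
def rcirc : Set A := {c | ∀ P ∈ minimalPrimes A, c ∉ P}

/-- The Frobenius closure `I^F` of an ideal `I` in a ring of characteristic `p`:
elements `x` with `x^(p^e) ∈ I^[p^e]` for all `e ≫ 0`.  (In characteristic `p` the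
defining set is already an ideal, so taking the span is harmless.) -/
def fcl (I : Ideal A) : Ideal A :=
  Ideal.span {x | ∃ N, ∀ e ≥ N, x ^ p ^ e ∈ fpow A I (p ^ e)}

/-- The tight closure `I^*` of an ideal `I` in a ring of characteristic `p`:
elements `x` such that `c * x^(p^e) ∈ I^[p^e]` for some `c ∈ A°` and all `e ≫ 0`. -/
def tcl (I : Ideal A) : Ideal A :=
  Ideal.span {x | ∃ c ∈ rcirc A, ∃ N, ∀ e ≥ N, c * x ^ p ^ e ∈ fpow A I (p ^ e)}

/-- The integral closure of an ideal: elements `x` satisfying an equation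
`x^n + a₁ x^(n-1) + ⋯ + a_n = 0` with `aᵢ ∈ Iⁱ`. -/
def icl (I : Ideal A) : Set A :=
  {x | ∃ n : ℕ, 0 < n ∧ ∃ a : ℕ → A, (∀ i, 1 ≤ i → i ≤ n → a i ∈ I ^ i) ∧
    x ^ n + ∑ i ∈ Finset.Icc 1 n, a i * x ^ (n - i) = 0}

/-- A filter regular element: `(0 :_A x)` has finite length. -/
def IsFilterRegular (x : A) : Prop :=
  IsFiniteLength A ((⊥ : Submodule A A).colon (Ideal.span {x}))

/-- A filter regular sequence: each `x i` is filter regular modulo its predecessors. -/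
def IsFilterRegularSeq {t : ℕ} (x : Fin t → A) : Prop :=
  ∀ i : Fin t,
    IsFilterRegular (A ⧸ Ideal.span (x '' {j | j < i}))
      (Ideal.Quotient.mk (Ideal.span (x '' {j | j < i})) (x i))

/-- An equidimensional ring: `dim A/P = dim A` for every minimal prime `P`. -/
def IsEquidim : Prop :=
  ∀ P ∈ minimalPrimes A, ringKrullDim (A ⧸ P) = ringKrullDim A

/-- A test element: `c ∈ A°` with `c · I^* ⊆ I` for every ideal `I`. -/
def HasTestElement : Prop :=
  ∃ c ∈ rcirc A, ∀ I : Ideal A, ∀ x ∈ tcl A p I, c * x ∈ I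

end BasicDefs

section LocalDefs

variable (A : Type u) [CommRing A] [IsLocalRing A] (p : ℕ)

/-- A (possibly partial) system of parameters of a local ring. -/
def IsSOP {t : ℕ} (x : Fin t → A) : Prop :=
  (∀ i, x i ∈ maximalIdeal A) ∧
    ringKrullDim (A ⧸ Ideal.span (Set.range x)) + (t : WithBot ℕ∞) = ringKrullDim A

/-- A full system of parameters of a local ring. -/
def IsFullSOP {t : ℕ} (x : Fin t → A) : Prop :=
  IsSOP A x ∧ (t : WithBot (WithTop ℕ)) = ringKrullDim A

/-- A parameter ideal: an ideal generated by a (possibly partial) system of parameters. -/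
def IsParamIdeal (q : Ideal A) : Prop :=
  ∃ (t : ℕ) (x : Fin t → A), IsSOP A x ∧ q = Ideal.span (Set.range x)

/-- An ideal generated by a full system of parameters. -/
def IsFullParamIdeal (q : Ideal A) : Prop :=
  ∃ (t : ℕ) (x : Fin t → A), IsFullSOP A x ∧ q = Ideal.span (Set.range x)

/-- F-rationality: every parameter ideal is tightly closed. -/
def FRational : Prop :=
  ∀ q : Ideal A, IsParamIdeal A q → tcl A p q = q

/-- Weak F-regularity: every ideal is tightly closed. -/
def WeaklyFRegular : Prop := ∀ I : Ideal A, tcl A p I = I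

/-- The parameter test ideal `τ_par(A) = ⋂_q (q : q^*)`. -/
noncomputable def paramTestIdeal : Ideal A :=
  ⨅ (q : Ideal A) (_ : IsParamIdeal A q), Submodule.colon q (tcl A p q)

/-- F-rationality on the punctured spectrum. -/
def FRationalOnPunctured : Prop :=
  ∀ (P : Ideal A) [P.IsPrime], P ≠ maximalIdeal A →
    FRational (Localization.AtPrime P) p

/-- Cohen–Macaulay local ring: every full system of parameters is a regular sequence. -/
def IsCMLocal : Prop :=
  ∀ (t : ℕ) (x : Fin t → A), IsFullSOP A x →
    RingTheory.Sequence.IsRegular A (List.ofFn x)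

/-- An `m`-primary ideal of a local ring. -/
def IsMPrimary (q : Ideal A) : Prop := q.radical = maximalIdeal A

end LocalDefs

section FInj

variable (A : Type u) [CommRing A] (p : ℕ) [ExpChar A p]

/-- `A` viewed as a module over itself by restriction of scalars along the Frobenius. -/
def FrobTwist (_p : ℕ) : Type u := A

instance : AddCommGroup (FrobTwist A p) := inferInstanceAs (AddCommGroup A)

noncomputable instance : Module A (FrobTwist A p) := Module.compHom A (frobenius A p)

/-- The Frobenius `x ↦ x^p`, as an `A`-linear map `A → F_* A`. -/
noncomputable def frobHom : A →ₗ[A] FrobTwist A p where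
  toFun x := x ^ p
  map_add' x y := add_pow_expChar x y p
  map_smul' r x := by
    show (r * x) ^ p = frobenius A p r * x ^ p
    rw [frobenius_def, mul_pow]

/-- F-injectivity: the map induced by the Frobenius on each local cohomology module
`H^i_m(A)` is injective. -/
noncomputable def FInjective [IsLocalRing A] : Prop :=
  ∀ i : ℕ, Function.Injective
    ((localCohomology (maximalIdeal A) i).map
      (ModuleCat.ofHom (frobHom A p) :
        ModuleCat.of A A ⟶ ModuleCat.of A (FrobTwist A p)))

end FInj

section Excellence

variable (B : Type u) [CommRing B]

/-- A regular local ring: Noetherian, and the maximal ideal is generated by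
`dim B` elements. -/
def IsRegularLocal [IsLocalRing B] : Prop :=
  IsNoetherianRing B ∧ ∃ (t : ℕ) (x : Fin t → B),
    maximalIdeal B = Ideal.span (Set.range x) ∧
      (t : WithBot (WithTop ℕ)) = ringKrullDim B

/-- A regular ring: all localizations at primes are regular local rings. -/
def IsRegularRing' : Prop :=
  ∀ (P : Ideal B) [P.IsPrime], IsRegularLocal (Localization.AtPrime P)

/-- A saturated chain of primes. -/
def IsSaturatedChain {n : ℕ} (c : Fin (n + 1) → Ideal B) : Prop :=
  StrictMono c ∧ (∀ i, (c i).IsPrime) ∧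
    ∀ i : Fin n, ¬∃ r : Ideal B, r.IsPrime ∧ c i.castSucc < r ∧ r < c i.succ

/-- A catenary ring: any two saturated chains of primes with the same endpoints
have the same length. -/
def IsCatenary : Prop :=
  ∀ (P Q : Ideal B), P.IsPrime → Q.IsPrime → P ≤ Q →
    ∀ (n m : ℕ) (c : Fin (n + 1) → Ideal B) (d : Fin (m + 1) → Ideal B),
      IsSaturatedChain B c → IsSaturatedChain B d →
      c 0 = P → c (Fin.last n) = Q → d 0 = P → d (Fin.last m) = Q → n = m

/-- Universally catenary: every finitely generated `B`-algebra
(i.e. quotient of a polynomial ring over `B`) is catenary. -/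
def IsUniversallyCatenary : Prop :=
  ∀ (n : ℕ) (I : Ideal (MvPolynomial (Fin n) B)),
    IsCatenary (MvPolynomial (Fin n) B ⧸ I)

/-- J-2: the regular locus of every finitely generated `B`-algebra is open. -/
def IsJ2 : Prop :=
  ∀ (n : ℕ) (I : Ideal (MvPolynomial (Fin n) B)),
    IsOpen {P : PrimeSpectrum (MvPolynomial (Fin n) B ⧸ I) |
      IsRegularLocal (Localization.AtPrime P.asIdeal)}

/-- The G-ring (geometrically regular formal fibers) condition for a Noetherian local
ring, via the classical characterization: for every module-finite `B`-algebra `C`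
which is a local domain, the generic formal fiber of `C` is regular. -/
def IsGLocal [IsLocalRing B] : Prop :=
  ∀ (C : Type u) [CommRing C] [Algebra B C] [IsLocalRing C] [IsDomain C],
    Module.Finite B C →
      IsRegularRing' (Localization
        (Submonoid.map (algebraMap C (AdicCompletion (maximalIdeal C) C))
          (nonZeroDivisors C)))

/-- An excellent local ring: Noetherian, geometrically regular formal fibers (G-ring),
J-2, and universally catenary. -/
def IsExcellentLocal [IsLocalRing B] : Prop :=
  IsNoetherianRing B ∧ IsGLocal B ∧ IsJ2 B ∧ IsUniversallyCatenary B

/-- A Cohen–Macaulay ring: all localizations at primes are Cohen–Macaulay local rings. -/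
def IsCMRing : Prop :=
  ∀ (P : Ideal B) [P.IsPrime], IsCMLocal (Localization.AtPrime P)

/-- A homomorphic image of a (Noetherian) Cohen–Macaulay ring. -/
def IsHomImageOfCM : Prop :=
  ∃ (S : Type u) (_ : CommRing S) (f : S →+* B),
    Function.Surjective f ∧ IsNoetherianRing S ∧ IsCMRing S

/-- Locally equidimensional: all localizations at primes are equidimensional. -/
def IsLocallyEquidim : Prop :=
  ∀ (P : Ideal B) [P.IsPrime], IsEquidim (Localization.AtPrime P)

/-- Permutable parameters: for every permutation, the ideal generated by each initial
segment is proper and all of its minimal primes have height equal to the length of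
the segment. -/
def ArePermutableParameters {t : ℕ} (x : Fin t → B) : Prop :=
  ∀ (σ : Equiv.Perm (Fin t)) (i : ℕ), i ≤ t →
    Ideal.span ((fun j => x (σ j)) '' {j : Fin t | (j : ℕ) < i}) ≠ ⊤ ∧
    ∀ (P : Ideal B) [P.IsPrime],
      P ∈ (Ideal.span ((fun j => x (σ j)) '' {j : Fin t | (j : ℕ) < i})).minimalPrimes →
        ringKrullDim (Localization.AtPrime P) = (i : WithBot (WithTop ℕ))

/-- An ideal generated by monomials in the elements `x i`. -/
def GeneratedByMonomialsIn {t : ℕ} (x : Fin t → B) (J : Ideal B) : Prop :=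
  ∃ s : Finset (Fin t → ℕ),
    J = Ideal.span ((fun a : Fin t → ℕ => ∏ i, x i ^ a i) '' (s : Set (Fin t → ℕ)))

end Excellence

section Monomial

variable (p t : ℕ)

/-- An irreducible monomial ideal: generated by pure powers of a subset of the
variables. -/
def IsPurePowerIdeal (I : Ideal (MvPolynomial (Fin t) (ZMod p))) : Prop :=
  ∃ (S : Finset (Fin t)) (a : Fin t → ℕ), (∀ i ∈ S, 1 ≤ a i) ∧
    I = Ideal.span ((fun i => MvPolynomial.X i ^ a i) '' (S : Set (Fin t)))

/-- A monomial ideal of the polynomial ring. -/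
def IsMonomialIdeal (I : Ideal (MvPolynomial (Fin t) (ZMod p))) : Prop :=
  ∃ s : Set (Fin t → ℕ),
    I = Ideal.span ((fun a : Fin t → ℕ => ∏ i, MvPolynomial.X i ^ a i) '' s)

end Monomial


section Statement2Aux

variable {R : Type u} [CommRing R] (p : ℕ) [Fact p.Prime] [CharP R p]

private lemma s2_fpow_map [ExpChar R p] (I : Ideal R) (e : ℕ) :
    fpow R I (p ^ e) = I.map (iterateFrobenius R p e) := by
  unfold fpow Ideal.map
  rfl

private lemma s2_fpow_span [ExpChar R p] (S : Set R) (e : ℕ) :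
    fpow R (Ideal.span S) (p ^ e) = Ideal.span ((fun x => x ^ p ^ e) '' S) := by
  rw [s2_fpow_map, Ideal.map_span]
  rfl

private lemma s2_fpow_fpow [ExpChar R p] (I : Ideal R) (e f : ℕ) :
    fpow R (fpow R I (p ^ e)) (p ^ f) = fpow R I (p ^ (e + f)) := by
  rw [s2_fpow_map, s2_fpow_map, s2_fpow_map, Ideal.map_map, add_comm e f,
    iterateFrobenius_add]

private lemma s2_mem_fpow (I : Ideal R) (e : ℕ) {x : R} (hx : x ∈ I) :
    x ^ p ^ e ∈ fpow R I (p ^ e) :=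
  Ideal.subset_span ⟨x, hx, rfl⟩

private lemma s2_fpow_le (I : Ideal R) (e : ℕ) : fpow R I (p ^ e) ≤ I := by
  rw [fpow, Ideal.span_le]
  rintro _ ⟨x, hx, rfl⟩
  exact I.pow_mem_of_mem hx _ (pow_pos (Nat.Prime.pos Fact.out) e)

private lemma s2_radical_fpow (I : Ideal R) (e : ℕ) :
    (fpow R I (p ^ e)).radical = I.radical := by
  refine le_antisymm (Ideal.radical_mono (s2_fpow_le p I e)) ?_
  have h : I ≤ (fpow R I (p ^ e)).radical := fun x hx => ⟨p ^ e, s2_mem_fpow p I e hx⟩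
  calc I.radical ≤ (fpow R I (p ^ e)).radical.radical := Ideal.radical_mono h
    _ = (fpow R I (p ^ e)).radical := Ideal.radical_idem _

private lemma s2_quotMap_isPrime {R : Type u} [CommRing R] {I J : Ideal R}
    (h : J.radical ≤ I.radical) (P : Ideal (R ⧸ I)) [P.IsPrime] :
    (Ideal.map (Ideal.Quotient.mk J) (Ideal.comap (Ideal.Quotient.mk I) P)).IsPrime ∧
    Ideal.comap (Ideal.Quotient.mk J) (Ideal.map (Ideal.Quotient.mk J)
      (Ideal.comap (Ideal.Quotient.mk I) P)) = Ideal.comap (Ideal.Quotient.mk I) P := by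
  set Q := Ideal.comap (Ideal.Quotient.mk I) P with hQ
  haveI hQp : Q.IsPrime := Ideal.IsPrime.comap _
  have h1 : I ≤ Q := by
    intro x hx
    have hx0 : Ideal.Quotient.mk I x = 0 := Ideal.Quotient.eq_zero_iff_mem.mpr hx
    rw [hQ, Ideal.mem_comap, hx0]
    exact P.zero_mem
  have hJQ : J ≤ Q := by
    calc J ≤ J.radical := Ideal.le_radical
      _ ≤ I.radical := h
      _ ≤ Q.radical := Ideal.radical_mono h1
      _ = Q := hQp.radical
  constructor
  · exact Ideal.map_isPrime_of_surjective Ideal.Quotient.mk_surjective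
      (by rwa [Ideal.mk_ker])
  · rw [Ideal.comap_map_of_surjective _ Ideal.Quotient.mk_surjective,
      ← RingHom.ker_eq_comap_bot, Ideal.mk_ker, sup_eq_left.mpr hJQ]

private lemma s2_kdim_quot_eq {R : Type u} [CommRing R] {I J : Ideal R}
    (h : I.radical = J.radical) :
    ringKrullDim (R ⧸ I) = ringKrullDim (R ⧸ J) := by
  let F : PrimeSpectrum (R ⧸ I) → PrimeSpectrum (R ⧸ J) :=
    fun P => ⟨_, (s2_quotMap_isPrime h.ge P.asIdeal).1⟩
  let G : PrimeSpectrum (R ⧸ J) → PrimeSpectrum (R ⧸ I) :=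
    fun P => ⟨_, (s2_quotMap_isPrime h.le P.asIdeal).1⟩
  have hGF : ∀ P, G (F P) = P := by
    intro P
    ext1
    show Ideal.map (Ideal.Quotient.mk I) (Ideal.comap (Ideal.Quotient.mk J)
      (Ideal.map (Ideal.Quotient.mk J)
        (Ideal.comap (Ideal.Quotient.mk I) P.asIdeal))) = P.asIdeal
    rw [(s2_quotMap_isPrime h.ge P.asIdeal).2,
      Ideal.map_comap_of_surjective _ Ideal.Quotient.mk_surjective]
  have hFG : ∀ P, F (G P) = P := by
    intro P
    ext1
    show Ideal.map (Ideal.Quotient.mk J) (Ideal.comap (Ideal.Quotient.mk I)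
      (Ideal.map (Ideal.Quotient.mk I)
        (Ideal.comap (Ideal.Quotient.mk J) P.asIdeal))) = P.asIdeal
    rw [(s2_quotMap_isPrime h.le P.asIdeal).2,
      Ideal.map_comap_of_surjective _ Ideal.Quotient.mk_surjective]
  have hFmono : Monotone F := fun P Q hPQ =>
    (PrimeSpectrum.asIdeal_le_asIdeal _ _).mp
      (Ideal.map_mono (Ideal.comap_mono ((PrimeSpectrum.asIdeal_le_asIdeal _ _).mpr hPQ)))
  have hGmono : Monotone G := fun P Q hPQ =>
    (PrimeSpectrum.asIdeal_le_asIdeal _ _).mp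
      (Ideal.map_mono (Ideal.comap_mono ((PrimeSpectrum.asIdeal_le_asIdeal _ _).mpr hPQ)))
  exact Order.krullDim_eq_of_orderIso (Equiv.toOrderIso ⟨F, G, hGF, hFG⟩ hFmono hGmono)

private lemma s2_isParamIdeal_fpow [IsLocalRing R] {q : Ideal R}
    (hq : IsParamIdeal R q) (e : ℕ) : IsParamIdeal R (fpow R q (p ^ e)) := by
  haveI : ExpChar R p := .prime Fact.out
  obtain ⟨t, x, ⟨hmem, hdim⟩, rfl⟩ := hq
  have hrange : (fun y => y ^ p ^ e) '' Set.range x = Set.range (fun i => x i ^ p ^ e) := by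
    rw [← Set.range_comp]; rfl
  have hfp : fpow R (Ideal.span (Set.range x)) (p ^ e)
      = Ideal.span (Set.range (fun i => x i ^ p ^ e)) := by
    rw [s2_fpow_span, hrange]
  refine ⟨t, fun i => x i ^ p ^ e, ⟨fun i =>
    (maximalIdeal R).pow_mem_of_mem (hmem i) _ (pow_pos (Nat.Prime.pos Fact.out) e), ?_⟩,
    hfp⟩
  have hrad : (Ideal.span (Set.range (fun i => x i ^ p ^ e))).radical
      = (Ideal.span (Set.range x)).radical := by
    rw [← hfp]
    exact s2_radical_fpow p _ e
  rw [s2_kdim_quot_eq hrad]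
  exact hdim

private lemma s2_key [IsLocalRing R] {x : R} {e₀ : ℕ}
    (hx : x ^ p ^ e₀ ∈ paramTestIdeal R p) {q : Ideal R} (hq : IsParamIdeal R q)
    {z : R} (hz : z ∈ tcl R p q) : x * z ∈ fcl R p q := by
  haveI : ExpChar R p := .prime Fact.out
  induction hz using Submodule.span_induction with
  | mem z hzs =>
    obtain ⟨c, hc, N, hN⟩ := hzs
    refine Ideal.subset_span ⟨e₀, fun e he => ?_⟩
    have hz' : z ^ p ^ e ∈ tcl R p (fpow R q (p ^ e)) := by
      refine Ideal.subset_span ⟨c, hc, N, fun g hg => ?_⟩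
      rw [s2_fpow_fpow, ← pow_mul, ← pow_add]
      exact hN (e + g) (le_trans hg (Nat.le_add_left _ _))
    have h1 : paramTestIdeal R p
        ≤ Submodule.colon (fpow R q (p ^ e)) (tcl R p (fpow R q (p ^ e))) :=
      iInf₂_le _ (s2_isParamIdeal_fpow p hq e)
    have h2 : x ^ p ^ e₀ * z ^ p ^ e ∈ fpow R q (p ^ e) := by
      have := Submodule.mem_colon.mp (h1 hx) _ hz'
      simpa [smul_eq_mul] using this
    have hle : p ^ e₀ ≤ p ^ e := Nat.pow_le_pow_right (Nat.Prime.pos Fact.out) he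
    have heq : (x * z) ^ p ^ e = x ^ (p ^ e - p ^ e₀) * (x ^ p ^ e₀ * z ^ p ^ e) := by
      rw [mul_pow, ← mul_assoc, ← pow_add, Nat.sub_add_cancel hle]
    rw [heq]
    exact Ideal.mul_mem_left _ _ h2
  | zero => rw [mul_zero]; exact Ideal.zero_mem _
  | add a b _ _ ha hb => rw [mul_add]; exact Ideal.add_mem _ ha hb
  | smul r a _ ha => rw [smul_eq_mul, mul_left_comm]; exact Ideal.mul_mem_left _ _ ha

end Statement2Aux

/-- If `J^[q₀] ⊆ τ_par(R)` for some `q₀ = p^{e₀}`, then `J · q^* ⊆ q^F`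
for every parameter ideal `q`; in particular `√(τ_par(R))` annihilates `q^*/q^F`. -/
theorem statement_2 (R : Type u) [CommRing R] [IsLocalRing R] [IsNoetherianRing R]
    (p : ℕ) [Fact p.Prime] [CharP R p]
    (J : Ideal R) (e₀ : ℕ) (hJ : fpow R J (p ^ e₀) ≤ paramTestIdeal R p) :
    (∀ q : Ideal R, IsParamIdeal R q → J * tcl R p q ≤ fcl R p q) ∧
    (∀ q : Ideal R, IsParamIdeal R q →
      (paramTestIdeal R p).radical * tcl R p q ≤ fcl R p q) := by
  constructor
  · intro q hq
    rw [Ideal.mul_le]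
    intro r hr s hs
    exact s2_key p (hJ (Ideal.subset_span ⟨r, hr, rfl⟩)) hq hs
  · intro q hq
    rw [Ideal.mul_le]
    intro r hr s hs
    obtain ⟨n, hn⟩ := hr
    have hlt : n ≤ p ^ n := le_of_lt (Nat.lt_pow_self (Nat.Prime.one_lt Fact.out) : n < p ^ n)
    have hmem : r ^ p ^ n ∈ paramTestIdeal R p := by
      have hsplit : r ^ p ^ n = r ^ n * r ^ (p ^ n - n) := by
        rw [← pow_add, Nat.add_sub_cancel' hlt]
      rw [hsplit]
      exact Ideal.mul_mem_right _ _ hn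
    exact s2_key p hmem hq hs
end

section
/- Let (R,m) be an F-rational Noetherian local ring of characteristic p > 0 which is Cohen–Macaulay, and let q = (x₁,…,x_d) be an ideal generated by a full system of parameters. Then for every q' = p^e, the product q·q^[q'] is tightly closed, i.e., (q q^[q'])^* = q q^[q'] = q^* (q^[q'])^*. -/
/-!
Definitions of characteristic-`p` notions (Frobenius powers, Frobenius/tight closure,
parameter ideals, F-rationality, F-injectivity, excellence, ...) used to state results
of "A characterization of F-rationality" (products of parameter ideals & tight closure).
-/

open IsLocalRing

universe u

open scoped Pointwise

section MyAux

variable {R : Type u} [CommRing R]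

lemma my_one_mem_rcirc : (1 : R) ∈ rcirc R := by
  intro P hP h1
  exact hP.1.1.ne_top ((Ideal.eq_top_iff_one P).mpr h1)

lemma my_pow_mem_fpow {I : Ideal R} {x : R} (hx : x ∈ I) (n : ℕ) : x ^ n ∈ fpow R I n :=
  Ideal.subset_span ⟨x, hx, rfl⟩

lemma my_fpow_mono {I J : Ideal R} (h : I ≤ J) (n : ℕ) : fpow R I n ≤ fpow R J n :=
  Ideal.span_mono (Set.image_mono h)

variable (p : ℕ) [Fact p.Prime] [CharP R p]

lemma my_pow_pn_mem_span_image {S : Set R} {y : R} (hy : y ∈ Ideal.span S) (n : ℕ) :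
    y ^ p ^ n ∈ Ideal.span ((· ^ p ^ n) '' S) := by
  induction hy using Submodule.span_induction with
  | mem x hx => exact Ideal.subset_span ⟨x, hx, rfl⟩
  | zero =>
      rw [zero_pow (pow_ne_zero n (Fact.out : p.Prime).ne_zero)]
      exact zero_mem _
  | add x y _ _ hx hy => rw [add_pow_char_pow]; exact add_mem hx hy
  | smul a x _ hx => rw [smul_eq_mul, mul_pow]; exact Ideal.mul_mem_left _ _ hx

lemma my_fpow_span (S : Set R) (n : ℕ) :
    fpow R (Ideal.span S) (p ^ n) = Ideal.span ((· ^ p ^ n) '' S) := by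
  refine le_antisymm (Ideal.span_le.mpr ?_) (Ideal.span_le.mpr ?_)
  · rintro _ ⟨y, hy, rfl⟩; exact my_pow_pn_mem_span_image p hy n
  · rintro _ ⟨y, hy, rfl⟩; exact my_pow_mem_fpow (Ideal.subset_span hy) _

lemma my_mem_tcl_of {I : Ideal R} {z c : R} (hc : c ∈ rcirc R) {N : ℕ}
    (h : ∀ e ≥ N, c * z ^ p ^ e ∈ fpow R I (p ^ e)) : z ∈ tcl R p I :=
  Ideal.subset_span ⟨c, hc, N, h⟩

lemma my_le_tcl (I : Ideal R) : I ≤ tcl R p I := fun z hz =>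
  my_mem_tcl_of p my_one_mem_rcirc (N := 0) fun e _ => by
    rw [one_mul]; exact my_pow_mem_fpow hz _

lemma my_ringKrullDim_quotient_le_of_le_radical {I J : Ideal R} (h : J ≤ I.radical) :
    ringKrullDim (R ⧸ I) ≤ ringKrullDim (R ⧸ J) := by
  have key : ∀ P : PrimeSpectrum (R ⧸ I),
      J ≤ P.asIdeal.comap (Ideal.Quotient.mk I) := by
    intro P
    refine h.trans ?_
    rw [Ideal.IsPrime.radical_le_iff inferInstance]
    intro y hy
    simp only [Ideal.mem_comap, Ideal.Quotient.eq_zero_iff_mem.mpr hy]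
    exact zero_mem _
  have keyP : ∀ P : PrimeSpectrum (R ⧸ I),
      ((P.asIdeal.comap (Ideal.Quotient.mk I)).map (Ideal.Quotient.mk J)).IsPrime := by
    intro P
    exact Ideal.map_isPrime_of_surjective Ideal.Quotient.mk_surjective
      (by rw [Ideal.mk_ker]; exact key P)
  apply Order.krullDim_le_of_strictMono
    (fun P : PrimeSpectrum (R ⧸ I) =>
      (⟨(P.asIdeal.comap (Ideal.Quotient.mk I)).map (Ideal.Quotient.mk J), keyP P⟩ :
        PrimeSpectrum (R ⧸ J)))
  intro P Q hPQ
  have hc : P.asIdeal.comap (Ideal.Quotient.mk I) < Q.asIdeal.comap (Ideal.Quotient.mk I) := by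
    refine lt_of_le_of_ne (Ideal.comap_mono hPQ.le) fun hEq => hPQ.ne ?_
    exact PrimeSpectrum.ext
      (Ideal.comap_injective_of_surjective _ Ideal.Quotient.mk_surjective hEq)
  show ((P.asIdeal.comap (Ideal.Quotient.mk I)).map (Ideal.Quotient.mk J)) <
      ((Q.asIdeal.comap (Ideal.Quotient.mk I)).map (Ideal.Quotient.mk J))
  refine lt_of_le_of_ne (Ideal.map_mono hc.le) fun hEq => hc.ne ?_
  have h1 := congrArg (Ideal.comap (Ideal.Quotient.mk J)) hEq
  rwa [Ideal.comap_map_of_surjective _ Ideal.Quotient.mk_surjective,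
    Ideal.comap_map_of_surjective _ Ideal.Quotient.mk_surjective,
    ← RingHom.ker_eq_comap_bot, Ideal.mk_ker,
    sup_eq_left.mpr (key P), sup_eq_left.mpr (key Q)] at h1

lemma my_ringKrullDim_quotient_eq {I J : Ideal R} (hIJ : I ≤ J) (hJI : J ≤ I.radical) :
    ringKrullDim (R ⧸ I) = ringKrullDim (R ⧸ J) :=
  le_antisymm (my_ringKrullDim_quotient_le_of_le_radical hJI)
    (my_ringKrullDim_quotient_le_of_le_radical (hIJ.trans Ideal.le_radical))

lemma my_isFullSOP_pow [IsLocalRing R] {t : ℕ} {x : Fin t → R} (hx : IsFullSOP R x)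
    (σ : Equiv.Perm (Fin t)) {M : ℕ} (hM : 0 < M) :
    IsFullSOP R (fun i => x (σ i) ^ M) := by
  obtain ⟨⟨hmem, hdim⟩, hfull⟩ := hx
  set q := Ideal.span (Set.range x) with hq
  set Iy := Ideal.span (Set.range fun i => x (σ i) ^ M) with hIy
  have hIq : Iy ≤ q := by
    rw [hIy, Ideal.span_le]; rintro _ ⟨i, rfl⟩
    have hxm : x (σ i) ∈ q := by rw [hq]; exact Ideal.subset_span ⟨σ i, rfl⟩
    exact Ideal.pow_mem_of_mem _ hxm _ hM
  have hqrad : q ≤ Iy.radical := by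
    rw [hq, Ideal.span_le]; rintro _ ⟨i, rfl⟩
    have hxm : x i ^ M ∈ Iy := by
      rw [hIy]; exact Ideal.subset_span ⟨σ.symm i, by simp⟩
    exact Ideal.mem_radical_of_pow_mem (Ideal.le_radical hxm)
  have hdim' : ringKrullDim (R ⧸ Iy) = ringKrullDim (R ⧸ q) :=
    my_ringKrullDim_quotient_eq hIq hqrad
  refine ⟨⟨fun i => Ideal.pow_mem_of_mem _ (hmem (σ i)) _ hM, ?_⟩, hfull⟩
  rw [show Ideal.span (Set.range fun i => x (σ i) ^ M) = Iy from rfl, hdim']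
  exact hdim

lemma my_quot_regular {N : Submodule R R} {g : R}
    (h : IsSMulRegular (R ⧸ N) g) {v : R} (hv : v * g ∈ N) : v ∈ N := by
  have h0 : g • (Submodule.Quotient.mk (p := N) v) = g • (0 : R ⧸ N) := by
    rw [smul_zero, ← Submodule.Quotient.mk_smul, smul_eq_mul, mul_comm]
    exact (Submodule.Quotient.mk_eq_zero N).mpr hv
  exact (Submodule.Quotient.mk_eq_zero N).mp (h h0)

lemma my_colon [IsLocalRing R] (hCM : IsCMLocal R) {n : ℕ} {x : Fin (n + 1) → R}
    (hx : IsFullSOP R x) (j : Fin (n + 1)) {M : ℕ} (hM : 0 < M)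
    {v : R} (hv : v * x j ^ M ∈ Ideal.span ((fun i => x i ^ M) '' {i | i ≠ j})) :
    v ∈ Ideal.span ((fun i => x i ^ M) '' {i | i ≠ j}) := by
  set σ := Equiv.swap j (Fin.last n) with hσ
  set y : Fin (n + 1) → R := fun i => x (σ i) ^ M with hy
  have hfy : IsFullSOP R y := my_isFullSOP_pow hx σ hM
  have hreg := hCM _ _ hfy
  have hlen : n < (List.ofFn y).length := by simp
  have h1 := hreg.toIsWeaklyRegular.regular_mod_prev n hlen
  have hlast : (List.ofFn y)[n] = x j ^ M := by
    rw [List.getElem_ofFn]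
    show x (σ (Fin.last n)) ^ M = x j ^ M
    rw [hσ, Equiv.swap_apply_right]
  have hofl : Ideal.ofList ((List.ofFn y).take n)
      = Ideal.span ((fun i => x i ^ M) '' {i | i ≠ j}) := by
    refine congrArg Ideal.span (Set.ext fun r => ?_)
    rw [Set.mem_setOf_eq, List.mem_take_iff_getElem]
    simp only [Set.mem_image, Set.mem_setOf_eq]
    constructor
    · rintro ⟨i, hi, rfl⟩
      have hi' : i < n + 1 := by simp at hi; omega
      have hin : i < n := by simp at hi; omega
      rw [List.getElem_ofFn]
      refine ⟨σ ⟨i, hi'⟩, ?_, rfl⟩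
      intro hEq
      have hlast' : (⟨i, hi'⟩ : Fin (n + 1)) = Fin.last n :=
        σ.injective (hEq.trans (Equiv.swap_apply_right j (Fin.last n)).symm)
      have := congrArg Fin.val hlast'
      simp only [Fin.val_last] at this
      omega
    · rintro ⟨k, hk, rfl⟩
      have hne : σ.symm k ≠ Fin.last n := by
        intro hEq
        apply hk
        have : k = σ (Fin.last n) := by rw [← hEq, Equiv.apply_symm_apply]
        rw [this, hσ, Equiv.swap_apply_right]
      have hlt : (σ.symm k : ℕ) < n := Fin.val_lt_last hne
      refine ⟨(σ.symm k : ℕ), by simp [hlt], ?_⟩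
      rw [List.getElem_ofFn]
      show x (σ ⟨(σ.symm k : ℕ), _⟩) ^ M = x k ^ M
      congr 2
      have : (⟨(σ.symm k : ℕ), by omega⟩ : Fin (n + 1)) = σ.symm k := rfl
      rw [this, Equiv.apply_symm_apply]
  have hNeq : (Ideal.ofList ((List.ofFn y).take n) • ⊤ : Submodule R R)
      = Ideal.span ((fun i => x i ^ M) '' {i | i ≠ j}) := by
    rw [Ideal.smul_eq_mul, Ideal.mul_top, hofl]
  rw [hlast] at h1
  rw [← hNeq] at hv ⊢
  exact my_quot_regular h1 hv

end MyAux

/-- In an F-rational Cohen–Macaulay Noetherian local ring, for `q`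
generated by a full system of parameters and any `q' = p^e`, the product `q·q^[q']`
is tightly closed, and equals `q^* (q^[q'])^*`. -/
theorem statement_4 (R : Type u) [CommRing R] [IsLocalRing R] [IsNoetherianRing R]
    (p : ℕ) [Fact p.Prime] [CharP R p]
    (hFR : FRational R p) (hCM : IsCMLocal R)
    (q : Ideal R) (hq : IsFullParamIdeal R q) (e : ℕ) :
    tcl R p (q * fpow R q (p ^ e)) = q * fpow R q (p ^ e) ∧
    q * fpow R q (p ^ e) = tcl R p q * tcl R p (fpow R q (p ^ e)) := by
  obtain ⟨t, x, hfsop, rfl⟩ := hq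
  set Q : Ideal R := Ideal.span (Set.range x) with hQ
  have hppos : 0 < p := (Fact.out : p.Prime).pos
  have hq'pos : 0 < p ^ e := pow_pos hppos e
  have hparamQ : IsParamIdeal R Q := ⟨t, x, hfsop.1, rfl⟩
  have hfpow : ∀ n : ℕ, fpow R Q (p ^ n) = Ideal.span (Set.range fun i => x i ^ p ^ n) := by
    intro n
    rw [hQ, my_fpow_span]
    congr 1
    exact (Set.range_comp (· ^ p ^ n) x).symm
  have hparamfq : IsParamIdeal R (fpow R Q (p ^ e)) := by
    rw [hfpow e]
    exact ⟨t, fun i => x i ^ p ^ e,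
      (my_isFullSOP_pow hfsop (Equiv.refl _) hq'pos).1, rfl⟩
  have htclQ : tcl R p Q = Q := hFR _ hparamQ
  have htclfq : tcl R p (fpow R Q (p ^ e)) = fpow R Q (p ^ e) := hFR _ hparamfq
  refine ⟨?_, by rw [htclQ, htclfq]⟩
  refine le_antisymm ?_ (my_le_tcl p _)
  refine Ideal.span_le.mpr ?_
  rintro z ⟨c, hc, N, hN⟩
  show z ∈ Q * fpow R Q (p ^ e)
  have hzA : z ∈ fpow R Q (p ^ e) := by
    rw [← htclfq]
    exact my_mem_tcl_of p hc (N := N) fun E hE =>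
      (my_fpow_mono (R := R) (I := Q * fpow R Q (p ^ e)) (J := fpow R Q (p ^ e))
        Ideal.mul_le_right (p ^ E)) (hN E hE)
  rw [hfpow e] at hzA
  obtain ⟨a, ha⟩ := (Submodule.mem_span_range_iff_exists_fun R).mp hzA
  have hJspan : Q * fpow R Q (p ^ e)
      = Ideal.span (Set.range x * Set.range fun i => x i ^ p ^ e) := by
    rw [hfpow e, hQ, Ideal.span_mul_span']
  have haj : ∀ j, a j ∈ Q := by
    intro j
    obtain ⟨n, rfl⟩ : ∃ n, t = n + 1 := ⟨t - 1, by have := j.pos; omega⟩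
    rw [← htclQ]
    refine my_mem_tcl_of p hc (N := N) fun E hE => ?_
    set P := p ^ E with hP
    set M := p ^ e * P with hM
    have hMpos : 0 < M := Nat.mul_pos hq'pos (pow_pos hppos E)
    set F := Ideal.span (Set.range fun i => x i ^ P) with hF
    set J' := Ideal.span ((fun i => x i ^ M) '' {i | i ≠ j}) with hJ'
    set g := x j ^ M with hg
    have hJ'F : J' ≤ F := by
      rw [hJ', Ideal.span_le]
      rintro _ ⟨i, _, rfl⟩
      have hxi : x i ^ M = (x i ^ P) ^ p ^ e := by rw [← pow_mul, hM, mul_comm]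
      show x i ^ M ∈ F
      rw [hxi, hF]
      have hxP : x i ^ P ∈ Ideal.span (Set.range fun i => x i ^ P) :=
        Ideal.subset_span ⟨i, rfl⟩
      exact Ideal.pow_mem_of_mem _ hxP _ hq'pos
    have hzP : z ^ P = ∑ i, a i ^ P * x i ^ M := by
      have h1 : z ^ P = ∑ i, (a i • x i ^ p ^ e) ^ P := by
        rw [← ha, hP]; exact sum_pow_char_pow p E _ _
      rw [h1]
      refine Finset.sum_congr rfl fun i _ => ?_
      rw [smul_eq_mul, mul_pow, ← pow_mul, hM]
    have hKey : c * z ^ P ∈ J' ⊔ F * Ideal.span {g} := by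
      have h0 := hN E hE
      rw [hJspan, my_fpow_span] at h0
      refine Ideal.span_le.mpr ?_ h0
      rintro _ ⟨w, hw, rfl⟩
      rw [Set.mem_mul] at hw
      obtain ⟨u, ⟨i, rfl⟩, v, ⟨k, rfl⟩, rfl⟩ := hw
      show (x i * x k ^ p ^ e) ^ p ^ E ∈ ↑(J' ⊔ F * Ideal.span {g})
      rw [mul_pow, ← pow_mul, ← hP, ← hM]
      by_cases hk : k = j
      · subst hk
        refine Submodule.mem_sup_right (Ideal.mul_mem_mul ?_ ?_)
        · rw [hF]; exact Ideal.subset_span ⟨i, rfl⟩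
        · exact Ideal.subset_span rfl
      · refine Submodule.mem_sup_left (Ideal.mul_mem_left _ _ ?_)
        rw [hJ']
        exact Ideal.subset_span ⟨k, hk, rfl⟩
    have hterm : c * a j ^ P * g ∈ J' ⊔ F * Ideal.span {g} := by
      have hsplit : c * a j ^ P * g
          = c * z ^ P - ∑ i ∈ Finset.univ.erase j, c * (a i ^ P * x i ^ M) := by
        rw [hzP, Finset.mul_sum, ← Finset.sum_erase_add _ _ (Finset.mem_univ j), hg]
        ring
      rw [hsplit]
      refine sub_mem hKey (Ideal.sum_mem _ fun i hi => Submodule.mem_sup_left ?_)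
      refine Ideal.mul_mem_left _ _ (Ideal.mul_mem_left _ _ ?_)
      rw [hJ']
      exact Ideal.subset_span ⟨i, Finset.ne_of_mem_erase hi, rfl⟩
    obtain ⟨w, hw, v, hv, hsum⟩ := Submodule.mem_sup.mp hterm
    rw [mul_comm] at hv
    obtain ⟨u, hu, huv⟩ := Ideal.mem_span_singleton_mul.mp hv
    have hcol : (c * a j ^ P - u) * g ∈ J' := by
      have heqw : (c * a j ^ P - u) * g = w := by
        rw [← huv] at hsum
        linear_combination -hsum
      exact heqw ▸ hw
    have hcol' : (c * a j ^ P - u) * x j ^ M ∈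
        Ideal.span ((fun i => x i ^ M) '' {i | i ≠ j}) := by
      rw [← hJ', ← hg]; exact hcol
    have hurest := my_colon hCM hfsop j hMpos hcol'
    rw [← hJ'] at hurest
    have hmemF : c * a j ^ P ∈ F := by
      have h2 := add_mem (hJ'F hurest) hu
      simpa using h2
    rw [hP, hfpow E]
    rw [hF, hP] at hmemF
    exact hmemF
  rw [← ha]
  refine Ideal.sum_mem _ fun i _ => ?_
  rw [smul_eq_mul]
  have hxQ : x i ∈ Q := by rw [hQ]; exact Ideal.subset_span ⟨i, rfl⟩
  exact Ideal.mul_mem_mul (haj i) (my_pow_mem_fpow hxQ _)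
end

section
/- Let (R,m) be an F-rational Cohen–Macaulay Noetherian local ring of characteristic p > 0, and let q₁ ⊆ q₂ be ideals each generated by a system of parameters of the same length t. Then (q₁q₂)^* = q₁q₂. -/
/-!
Definitions of characteristic-`p` notions (Frobenius powers, Frobenius/tight closure,
parameter ideals, F-rationality, F-injectivity, excellence, ...) used to state results
of "A characterization of F-rationality" (products of parameter ideals & tight closure).
-/

open IsLocalRing

universe u

section St11Aux

set_option linter.unusedSectionVars false

namespace St11Aux

variable {A : Type u} [CommRing A]


variable {A : Type u} [CommRing A]

lemma ideal_smul_top (I : Ideal A) : (I • ⊤ : Submodule A A) = I := by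
  rw [Ideal.smul_eq_mul, Ideal.mul_top]

/-- relations on sequences with the prefix-regularity property -/
def PrefixReg {n : ℕ} (v : Fin n → A) : Prop :=
  ∀ i : Fin n, ∀ a : A, v i * a ∈ Ideal.span (v '' {j | j < i}) →
    a ∈ Ideal.span (v '' {j | j < i})

lemma image_lt_last {n : ℕ} (v : Fin (n + 1) → A) :
    v '' {j | j < Fin.last n} = Set.range (Fin.init v) := by
  ext w
  constructor
  · rintro ⟨j, hj, rfl⟩
    have hj' : (j : ℕ) < n := hj
    exact ⟨⟨j, hj'⟩, congrArg v (Fin.ext rfl)⟩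
  · rintro ⟨i, rfl⟩
    exact ⟨i.castSucc, Fin.castSucc_lt_last i, rfl⟩

lemma image_lt_castSucc {n : ℕ} (v : Fin (n + 1) → A) (i : Fin n) :
    Fin.init v '' {j | j < i} = v '' {j | j < i.castSucc} := by
  ext w
  constructor
  · rintro ⟨j, hj, rfl⟩
    exact ⟨j.castSucc, Fin.castSucc_lt_castSucc_iff.mpr hj, rfl⟩
  · rintro ⟨j, hj, rfl⟩
    have hj' : (j : ℕ) < n := (Fin.lt_def.mp hj).trans i.2
    refine ⟨⟨j, hj'⟩, ?_, ?_⟩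
    · exact Fin.lt_def.mpr (Fin.lt_def.mp hj)
    · exact congrArg v (Fin.ext rfl)

lemma prefixReg_init {n : ℕ} {v : Fin (n + 1) → A} (h : PrefixReg v) :
    PrefixReg (Fin.init v) := by
  intro i a ha
  rw [image_lt_castSucc] at ha ⊢
  exact h i.castSucc a ha

lemma relation_mem_span {n : ℕ} (v : Fin n → A) (hreg : PrefixReg v)
    (u : Fin n → A) (hu : ∑ i, u i * v i = 0) : ∀ i, u i ∈ Ideal.span (Set.range v) := by
  induction n with
  | zero => exact fun i => i.elim0
  | succ n ih =>
    have hsum := hu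
    rw [Fin.sum_univ_castSucc] at hsum
    have hlast : v (Fin.last n) * u (Fin.last n) ∈
        Ideal.span (v '' {j | j < Fin.last n}) := by
      have : v (Fin.last n) * u (Fin.last n)
          = -(∑ i : Fin n, u i.castSucc * v i.castSucc) := by
        rw [mul_comm]; linear_combination hsum
      rw [this]
      refine neg_mem (Ideal.sum_mem _ fun i _ => Ideal.mul_mem_left _ _ ?_)
      exact Ideal.subset_span ⟨i.castSucc, Fin.castSucc_lt_last i, rfl⟩
    have hu_last : u (Fin.last n) ∈ Ideal.span (Set.range (Fin.init v)) := by
      rw [← image_lt_last]; exact hreg (Fin.last n) _ hlast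
    obtain ⟨d, hd⟩ := (Submodule.mem_span_range_iff_exists_fun A).mp hu_last
    have hrel : ∑ i : Fin n, (u i.castSucc + d i * v (Fin.last n)) * Fin.init v i = 0 := by
      have : ∑ i : Fin n, (u i.castSucc + d i * v (Fin.last n)) * Fin.init v i
          = (∑ i : Fin n, u i.castSucc * v i.castSucc)
            + (∑ i : Fin n, d i • Fin.init v i) * v (Fin.last n) := by
        rw [Finset.sum_mul, ← Finset.sum_add_distrib]
        refine Finset.sum_congr rfl fun i _ => ?_
        show _ = u i.castSucc * v i.castSucc + (d i * Fin.init v i) * v (Fin.last n)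
        have : Fin.init v i = v i.castSucc := rfl
        rw [this]; ring
      rw [this, hd]; exact hsum
    have hmem := ih (Fin.init v) (prefixReg_init hreg) _ hrel
    have hinit_le : Ideal.span (Set.range (Fin.init v)) ≤ Ideal.span (Set.range v) := by
      refine Ideal.span_mono ?_
      rintro _ ⟨i, rfl⟩
      exact ⟨i.castSucc, rfl⟩
    intro i
    refine Fin.lastCases ?_ ?_ i
    · exact hinit_le hu_last
    · intro i
      have h1 : u i.castSucc + d i * v (Fin.last n) ∈ Ideal.span (Set.range v) :=
        hinit_le (hmem i)
      have h2 : d i * v (Fin.last n) ∈ Ideal.span (Set.range v) :=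
        Ideal.mul_mem_left _ _ (Ideal.subset_span ⟨Fin.last n, rfl⟩)
      simpa using sub_mem h1 h2


section FpowTcl

variable (A) (p : ℕ)

lemma fpow_mono {I J : Ideal A} (h : I ≤ J) (q : ℕ) : fpow A I q ≤ fpow A J q :=
  Ideal.span_mono (Set.image_mono h)

lemma pow_mem_fpow {I : Ideal A} {a : A} (h : a ∈ I) (q : ℕ) : a ^ q ∈ fpow A I q :=
  Ideal.subset_span ⟨a, h, rfl⟩

lemma one_mem_rcirc : (1 : A) ∈ rcirc A := by
  intro P hP
  exact fun h => hP.1.1.ne_top (Ideal.eq_top_of_isUnit_mem _ h isUnit_one)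

lemma le_tcl (I : Ideal A) : I ≤ tcl A p I := by
  intro a ha
  refine Ideal.subset_span ⟨1, one_mem_rcirc A, 0, fun e _ => ?_⟩
  rw [one_mul]
  exact pow_mem_fpow A ha _

lemma tcl_mono {I J : Ideal A} (h : I ≤ J) : tcl A p I ≤ tcl A p J := by
  refine Ideal.span_mono ?_
  rintro a ⟨c, hc, N, hN⟩
  exact ⟨c, hc, N, fun e he => fpow_mono A h _ (hN e he)⟩

variable {A p}

lemma pow_mem_span_pow [Fact p.Prime] [CharP A p] (S : Set A) {a : A}
    (h : a ∈ Ideal.span S) (e : ℕ) :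
    a ^ p ^ e ∈ Ideal.span ((fun s => s ^ p ^ e) '' S) := by
  haveI : ExpChar A p := ExpChar.prime Fact.out
  induction h using Submodule.span_induction with
  | mem s hs => exact Ideal.subset_span ⟨s, hs, rfl⟩
  | zero =>
    rw [zero_pow (pow_ne_zero _ (Fact.out (p := p.Prime)).ne_zero)]
    exact zero_mem _
  | add a b _ _ ha hb => rw [add_pow_char_pow]; exact add_mem ha hb
  | smul r a _ ha =>
    rw [smul_eq_mul, mul_pow]
    exact Ideal.mul_mem_left _ _ ha

lemma fpow_span_le [Fact p.Prime] [CharP A p] (S : Set A) (e : ℕ) :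
    fpow A (Ideal.span S) (p ^ e) ≤ Ideal.span ((fun s => s ^ p ^ e) '' S) := by
  rw [fpow, Ideal.span_le]
  rintro _ ⟨a, ha, rfl⟩
  exact pow_mem_span_pow S ha e

end FpowTcl

lemma mem_mul_span_range {n : ℕ} (z : Fin n → A) (J : Ideal A) {w : A}
    (hw : w ∈ J * Ideal.span (Set.range z)) :
    ∃ d : Fin n → A, (∀ i, d i ∈ J) ∧ w = ∑ i, d i * z i := by
  refine Submodule.mul_induction_on hw ?_ ?_
  · intro m hm b hb
    obtain ⟨c, hc⟩ := (Submodule.mem_span_range_iff_exists_fun A).mp hb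
    refine ⟨fun i => m * c i, fun i => Ideal.mul_mem_right _ _ hm, ?_⟩
    rw [← hc, Finset.mul_sum]
    exact Finset.sum_congr rfl fun i _ => by rw [smul_eq_mul, mul_assoc]
  · rintro a b ⟨d₁, hd₁, rfl⟩ ⟨d₂, hd₂, rfl⟩
    exact ⟨fun i => d₁ i + d₂ i, fun i => add_mem (hd₁ i) (hd₂ i),
      by rw [← Finset.sum_add_distrib]; exact Finset.sum_congr rfl fun i _ => by ring⟩

lemma coeff_mem_of_sum_mem {n : ℕ} {v : Fin n → A} (hreg : PrefixReg v) {J : Ideal A}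
    (hvJ : ∀ i, v i ∈ J) {u : Fin n → A}
    (hu : (∑ i, u i * v i) ∈ J * Ideal.span (Set.range v)) : ∀ i, u i ∈ J := by
  obtain ⟨d, hd, hsum⟩ := mem_mul_span_range v J hu
  have hrel : ∑ i, (u i - d i) * v i = 0 := by
    have : ∑ i, (u i - d i) * v i = (∑ i, u i * v i) - ∑ i, d i * v i := by
      rw [← Finset.sum_sub_distrib]
      exact Finset.sum_congr rfl fun i _ => by ring
    rw [this, ← hsum, sub_self]
  have hspan_le : Ideal.span (Set.range v) ≤ J := by
    rw [Ideal.span_le]; rintro _ ⟨i, rfl⟩; exact hvJ i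
  intro i
  have := hspan_le (relation_mem_span v hreg _ hrel i)
  simpa using add_mem this (hd i)

lemma prefixReg_of_isRegular {n : ℕ} (v : Fin n → A)
    (h : RingTheory.Sequence.IsRegular A (List.ofFn v)) : PrefixReg v := by
  intro i a ha
  have hlen : (i : ℕ) < (List.ofFn v).length := by simpa using i.2
  have h1 := h.toIsWeaklyRegular.regular_mod_prev i.1 hlen
  have hIdeal : Ideal.ofList ((List.ofFn v).take i.1) = Ideal.span (v '' {j | j < i}) := by
    unfold Ideal.ofList
    congr 1
    ext r
    simp only [List.mem_take_iff_getElem, List.getElem_ofFn, List.length_ofFn, Set.mem_image,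
      Set.mem_setOf_eq]
    constructor
    · rintro ⟨m, hm, rfl⟩
      have hm' : m < n := lt_of_lt_of_le hm (min_le_right _ _)
      exact ⟨⟨m, hm'⟩, lt_of_lt_of_le (lt_min_iff.mp hm).1 le_rfl, rfl⟩
    · rintro ⟨j, hj, rfl⟩
      exact ⟨j.1, lt_min hj j.2, rfl⟩
  have hgetElem : (List.ofFn v)[(i : ℕ)] = v i := by simp
  rw [hgetElem] at h1
  have key : (v i) • (Submodule.Quotient.mk a :
      A ⧸ (Ideal.ofList ((List.ofFn v).take i.1) • ⊤ : Submodule A A)) = v i • 0 := by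
    rw [smul_zero, ← Submodule.Quotient.mk_smul, Submodule.Quotient.mk_eq_zero,
      ideal_smul_top, hIdeal]
    simpa [smul_eq_mul] using ha
  have := h1 key
  rw [Submodule.Quotient.mk_eq_zero, ideal_smul_top, hIdeal] at this
  exact this

lemma range_append {m n : ℕ} {γ : Type*} (u : Fin m → γ) (z : Fin n → γ) :
    Set.range (Fin.append u z) = Set.range u ∪ Set.range z := by
  ext w
  constructor
  · rintro ⟨j, rfl⟩
    refine Fin.addCases (motive := fun j => Fin.append u z j ∈ Set.range u ∪ Set.range z)
      ?_ ?_ j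
    · intro i; left; exact ⟨i, (Fin.append_left u z i).symm⟩
    · intro i; right; exact ⟨i, (Fin.append_right u z i).symm⟩
  · rintro (⟨i, rfl⟩ | ⟨i, rfl⟩)
    · exact ⟨Fin.castAdd n i, Fin.append_left u z i⟩
    · exact ⟨Fin.natAdd m i, Fin.append_right u z i⟩

lemma image_append_lt_castAdd {m n : ℕ} (u : Fin m → A) (z : Fin n → A) (i : Fin m) :
    Fin.append u z '' {j | j < Fin.castAdd n i} = u '' {j | j < i} := by
  ext w
  constructor
  · rintro ⟨j, hj, rfl⟩
    have hj1 : (j : ℕ) < (i : ℕ) := Fin.lt_def.mp hj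
    have hj2 : (j : ℕ) < m := hj1.trans i.2
    refine ⟨⟨j, hj2⟩, Fin.lt_def.mpr hj1, ?_⟩
    have : j = Fin.castAdd n ⟨j, hj2⟩ := Fin.ext rfl
    exact (Fin.append_left u z ⟨j, hj2⟩).symm.trans (congrArg (Fin.append u z) this.symm)
  · rintro ⟨j, hj, rfl⟩
    exact ⟨Fin.castAdd n j, Fin.lt_def.mpr (Fin.lt_def.mp hj), Fin.append_left u z j⟩

lemma prefixReg_prefix {m n : ℕ} {u : Fin m → A} {z : Fin n → A}
    (h : PrefixReg (Fin.append u z)) : PrefixReg u := by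
  intro i a ha
  have key := h (Fin.castAdd n i) a
  rw [image_append_lt_castAdd, Fin.append_left] at key
  exact key ha

end St11Aux

end St11Aux


section St11Dim

set_option linter.unusedSectionVars false

namespace St11Dim

open St11Aux

variable {A : Type u} [CommRing A]

lemma dimQuot_le_of_le_radical {I J : Ideal A} (h : J ≤ I.radical) :
    ringKrullDim (A ⧸ I) ≤ ringKrullDim (A ⧸ J) := by
  have hfun : ∀ P : PrimeSpectrum (A ⧸ I),
      ((P.asIdeal.comap (Ideal.Quotient.mk I)).map (Ideal.Quotient.mk J)).IsPrime := by
    intro P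
    have hI : I ≤ P.asIdeal.comap (Ideal.Quotient.mk I) := by
      intro r hr
      simp only [Ideal.mem_comap, Ideal.Quotient.eq_zero_iff_mem.mpr hr]
      exact zero_mem _
    have hJ : J ≤ P.asIdeal.comap (Ideal.Quotient.mk I) :=
      le_trans h (((Ideal.comap_isPrime _ _).radical_le_iff).mpr hI)
    refine Ideal.map_isPrime_of_surjective Ideal.Quotient.mk_surjective ?_
    rwa [Ideal.mk_ker]
  let f : PrimeSpectrum (A ⧸ I) → PrimeSpectrum (A ⧸ J) :=
    fun P => ⟨_, hfun P⟩
  have hJle : ∀ P : PrimeSpectrum (A ⧸ I), J ≤ P.asIdeal.comap (Ideal.Quotient.mk I) := by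
    intro P
    have hI : I ≤ P.asIdeal.comap (Ideal.Quotient.mk I) := by
      intro r hr
      simp only [Ideal.mem_comap, Ideal.Quotient.eq_zero_iff_mem.mpr hr]
      exact zero_mem _
    exact le_trans h (((Ideal.comap_isPrime _ _).radical_le_iff).mpr hI)
  have hmono : Monotone f := by
    intro P Q hPQ
    exact Ideal.map_mono (Ideal.comap_mono hPQ)
  have hinj : Function.Injective f := by
    intro P Q hPQ
    have h1 : ((P.asIdeal.comap (Ideal.Quotient.mk I)).map (Ideal.Quotient.mk J))
        = ((Q.asIdeal.comap (Ideal.Quotient.mk I)).map (Ideal.Quotient.mk J)) :=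
      congrArg PrimeSpectrum.asIdeal hPQ
    have h2 := congrArg (Ideal.comap (Ideal.Quotient.mk J)) h1
    rw [Ideal.comap_map_of_surjective _ Ideal.Quotient.mk_surjective,
      Ideal.comap_map_of_surjective _ Ideal.Quotient.mk_surjective] at h2
    have hker : Ideal.comap (Ideal.Quotient.mk J) ⊥ = J := by
      simpa [RingHom.ker_eq_comap_bot] using (Ideal.mk_ker (I := J))
    rw [hker, sup_eq_left.mpr (hJle P), sup_eq_left.mpr (hJle Q)] at h2
    exact PrimeSpectrum.ext
      (Ideal.comap_injective_of_surjective _ Ideal.Quotient.mk_surjective h2)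
  exact Order.krullDim_le_of_strictMono f (hmono.strictMono_of_injective hinj)

lemma dimQuot_eq_of_radical {I J : Ideal A} (h1 : I ≤ J.radical) (h2 : J ≤ I.radical) :
    ringKrullDim (A ⧸ I) = ringKrullDim (A ⧸ J) :=
  le_antisymm (dimQuot_le_of_le_radical h2) (dimQuot_le_of_le_radical h1)

lemma dimQuot_bot : ringKrullDim (A ⧸ (⊥ : Ideal A)) = ringKrullDim A :=
  ringKrullDim_eq_of_ringEquiv (RingEquiv.quotientBot A)

lemma dim_drop {z : A} (hz : ∀ P ∈ minimalPrimes A, z ∉ P) {n : ℕ}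
    (hd : ringKrullDim A ≤ ((n + 1 : ℕ) : WithBot (WithTop ℕ))) :
    ringKrullDim (A ⧸ Ideal.span {z}) ≤ ((n : ℕ) : WithBot (WithTop ℕ)) := by
  rw [ringKrullDim, Order.krullDim]
  refine iSup_le fun q => ?_
  let g : PrimeSpectrum (A ⧸ Ideal.span {z}) → PrimeSpectrum A :=
    fun P => ⟨P.asIdeal.comap (Ideal.Quotient.mk _), Ideal.comap_isPrime _ _⟩
  have hmono : Monotone g := fun P Q hPQ => Ideal.comap_mono hPQ
  have hinj : Function.Injective g := by
    intro P Q hPQ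
    exact PrimeSpectrum.ext (Ideal.comap_injective_of_surjective _
      Ideal.Quotient.mk_surjective (congrArg PrimeSpectrum.asIdeal hPQ))
  have hg : StrictMono g := hmono.strictMono_of_injective hinj
  let q' := q.map g hg
  have hz_head : z ∈ (q'.head).asIdeal := by
    show z ∈ (q.head).asIdeal.comap (Ideal.Quotient.mk _)
    simp only [Ideal.mem_comap]
    have hzz : (Ideal.Quotient.mk (Ideal.span {z})) z = 0 :=
      Ideal.Quotient.eq_zero_iff_mem.mpr (Ideal.subset_span rfl)
    rw [hzz]
    exact zero_mem _
  haveI := q'.head.isPrime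
  obtain ⟨P₀, hP₀, hP₀le⟩ :=
    Ideal.exists_minimalPrimes_le (I := (⊥ : Ideal A)) (J := q'.head.asIdeal) bot_le
  have hP₀mem : P₀ ∈ minimalPrimes A := hP₀
  have hlt : P₀ < q'.head.asIdeal :=
    lt_of_le_of_ne hP₀le (fun hEq => hz P₀ hP₀mem (hEq ▸ hz_head))
  let q'' := q'.cons ⟨P₀, hP₀mem.1.1⟩ hlt
  have hlen : (q''.length : WithBot (WithTop ℕ)) ≤ ringKrullDim A :=
    Order.LTSeries.length_le_krullDim q''
  have hlen2 : (q''.length : WithBot (WithTop ℕ)) ≤ ((n + 1 : ℕ) : WithBot (WithTop ℕ)) :=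
    le_trans hlen hd
  have hq'' : q''.length = q.length + 1 := by
    simp [q'', q', RelSeries.cons_length]
  rw [hq''] at hlen2
  have : q.length ≤ n := by
    have := Nat.cast_le (α := WithBot (WithTop ℕ)).mp hlen2
    omega
  exact Nat.cast_le.mpr this

end St11Dim

end St11Dim


section St11Compl

set_option linter.unusedSectionVars false

namespace St11Compl

open St11Aux St11Dim

universe v

lemma exists_completion : ∀ (n : ℕ) (A : Type v) [CommRing A] [IsNoetherianRing A]
    [IsLocalRing A], ringKrullDim A ≤ ((n : ℕ) : WithBot (WithTop ℕ)) →
    ∃ z : Fin n → A, (∀ i, z i ∈ maximalIdeal A) ∧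
      ringKrullDim (A ⧸ Ideal.span (Set.range z)) ≤ 0 := by
  intro n
  induction n with
  | zero =>
    intro A _ _ _ hd
    refine ⟨Fin.elim0, fun i => i.elim0, ?_⟩
    rw [Set.range_eq_empty, Ideal.span_empty, dimQuot_bot]
    exact le_trans hd (le_of_eq Nat.cast_zero)
  | succ n ih =>
    intro A _ _ _ hd
    by_cases h0 : ringKrullDim A ≤ 0
    · refine ⟨fun _ => 0, fun _ => zero_mem _, ?_⟩
      have h1 : Set.range (fun _ : Fin (n+1) => (0:A)) = {0} := Set.range_const
      have h2 : Ideal.span ({0} : Set A) = ⊥ := Ideal.span_singleton_eq_bot.mpr rfl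
      rw [h1, h2, dimQuot_bot]
      exact h0
    · have hpos : (0 : WithBot (WithTop ℕ)) < ringKrullDim A := lt_of_not_ge h0
      have hm_not_min : (maximalIdeal A) ∉ minimalPrimes A := by
        intro hm
        have hall : ∀ P : PrimeSpectrum A, P.asIdeal = maximalIdeal A := by
          intro P
          have hPle : P.asIdeal ≤ maximalIdeal A :=
            IsLocalRing.le_maximalIdeal P.isPrime.ne_top
          exact le_antisymm hPle (hm.2 ⟨P.isPrime, bot_le⟩ hPle)
        haveI : Subsingleton (PrimeSpectrum A) :=
          ⟨fun P Q => PrimeSpectrum.ext ((hall P).trans (hall Q).symm)⟩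
        exact absurd (Order.krullDim_nonpos_of_subsingleton (α := PrimeSpectrum A))
          (not_le.mpr hpos)
      have hfin := minimalPrimes.finite_of_isNoetherianRing A
      have hnotsub : ¬ ((maximalIdeal A : Set A) ⊆
          ⋃ P ∈ (hfin.toFinset : Set (Ideal A)), (P : Set A)) := by
        intro hsub
        obtain ⟨P, hPmem, hPle⟩ := (Ideal.subset_union_prime (s := hfin.toFinset)
          (f := fun P => P) ⊥ ⊥
          (fun i hi _ _ => (hfin.mem_toFinset.mp hi).1.1)).mp hsub
        have hP : P ∈ minimalPrimes A := hfin.mem_toFinset.mp hPmem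
        have heq : maximalIdeal A = P :=
          le_antisymm hPle (IsLocalRing.le_maximalIdeal hP.1.1.ne_top)
        exact hm_not_min (heq ▸ hP)
      obtain ⟨z, hzm, hznot⟩ := Set.not_subset.mp hnotsub
      have hz : ∀ P ∈ minimalPrimes A, z ∉ P := fun P hP hzP =>
        hznot (Set.mem_biUnion (hfin.mem_toFinset.mpr hP) hzP)
      have hd' : ringKrullDim (A ⧸ Ideal.span {z}) ≤ ((n : ℕ) : WithBot (WithTop ℕ)) :=
        dim_drop hz hd
      have hspan_le : Ideal.span {z} ≤ maximalIdeal A := by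
        rw [Ideal.span_le, Set.singleton_subset_iff]; exact hzm
      have hne : Ideal.span {z} ≠ ⊤ := fun h =>
        (IsLocalRing.maximalIdeal.isMaximal A).ne_top (top_le_iff.mp (h ▸ hspan_le))
      haveI : Nontrivial (A ⧸ Ideal.span {z}) := Ideal.Quotient.nontrivial_iff.mpr hne
      haveI : IsLocalRing (A ⧸ Ideal.span {z}) :=
        IsLocalRing.of_surjective' _ Ideal.Quotient.mk_surjective
      obtain ⟨z', hz'm, hz'dim⟩ := ih (A ⧸ Ideal.span {z}) hd'
      choose w hw using fun i => Ideal.Quotient.mk_surjective (z' i)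
      have hwm : ∀ i, w i ∈ maximalIdeal A := by
        intro i
        by_contra hcon
        have hu : IsUnit (w i) := by
          by_contra hnu
          exact hcon ((IsLocalRing.mem_maximalIdeal _).mpr hnu)
        have hu2 := hu.map (Ideal.Quotient.mk (Ideal.span {z}))
        rw [hw i] at hu2
        exact (IsLocalRing.mem_maximalIdeal _).mp (hz'm i) hu2
      refine ⟨Fin.cons z w, ?_, ?_⟩
      · intro i
        refine Fin.cases hzm (fun j => hwm j) i
      · rw [Fin.range_cons, ← Set.union_singleton, Set.union_comm, Ideal.span_union]
        have hmap : (Ideal.span (Set.range w)).map (Ideal.Quotient.mk (Ideal.span {z}))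
            = Ideal.span (Set.range z') := by
          rw [Ideal.map_span, ← Set.range_comp]
          congr 1
          exact congrArg Set.range (funext fun i => hw i)
        have heq := ringKrullDim_eq_of_ringEquiv
          (DoubleQuot.quotQuotEquivQuotSup (Ideal.span {z}) (Ideal.span (Set.range w)))
        rw [← heq, hmap]
        exact hz'dim

end St11Compl

end St11Compl


section St11Main

namespace St11Main

open St11Aux St11Dim St11Compl

universe v

lemma completion_ideal {A : Type v} [CommRing A] [IsNoetherianRing A] [IsLocalRing A]
    (I : Ideal A) (hI : I ≤ maximalIdeal A) (n : ℕ)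
    (hd : ringKrullDim (A ⧸ I) ≤ ((n : ℕ) : WithBot (WithTop ℕ))) :
    ∃ z : Fin n → A, (∀ i, z i ∈ maximalIdeal A) ∧
      ringKrullDim (A ⧸ (I ⊔ Ideal.span (Set.range z))) ≤ 0 := by
  have hne : I ≠ ⊤ := fun h =>
    (IsLocalRing.maximalIdeal.isMaximal A).ne_top (top_le_iff.mp (h ▸ hI))
  haveI : Nontrivial (A ⧸ I) := Ideal.Quotient.nontrivial_iff.mpr hne
  haveI : IsLocalRing (A ⧸ I) := IsLocalRing.of_surjective' _ Ideal.Quotient.mk_surjective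
  obtain ⟨z', hz'm, hz'dim⟩ := exists_completion n (A ⧸ I) hd
  choose w hw using fun i => Ideal.Quotient.mk_surjective (z' i)
  have hwm : ∀ i, w i ∈ maximalIdeal A := by
    intro i
    by_contra hcon
    have hu : IsUnit (w i) := by
      by_contra hnu
      exact hcon ((IsLocalRing.mem_maximalIdeal _).mpr hnu)
    have hu2 := hu.map (Ideal.Quotient.mk I)
    rw [hw i] at hu2
    exact (IsLocalRing.mem_maximalIdeal _).mp (hz'm i) hu2
  refine ⟨w, hwm, ?_⟩
  have hmap : (Ideal.span (Set.range w)).map (Ideal.Quotient.mk I)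
      = Ideal.span (Set.range z') := by
    rw [Ideal.map_span, ← Set.range_comp]
    congr 1
    exact congrArg Set.range (funext fun i => hw i)
  have heq := ringKrullDim_eq_of_ringEquiv
    (DoubleQuot.quotQuotEquivQuotSup I (Ideal.span (Set.range w)))
  rw [← heq, hmap]
  exact hz'dim

lemma top_add_natCast (t : ℕ) :
    (⊤ : WithBot ℕ∞) + ((t : ℕ) : WithBot ℕ∞) = ⊤ := by
  have h1 : ((t : ℕ) : WithBot ℕ∞) = (((t : ℕ) : ℕ∞) : WithBot ℕ∞) := by
    norm_cast
  rw [h1, show (⊤ : WithBot ℕ∞) = (((⊤ : ℕ∞)) : WithBot ℕ∞) from rfl,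
    ← WithBot.coe_add, top_add]

end St11Main

end St11Main

/-- In an F-rational Cohen–Macaulay Noetherian local ring, if
`q₁ ⊆ q₂` are ideals each generated by a system of parameters of the same length, then
`(q₁q₂)^* = q₁q₂`. -/
theorem statement_11 (R : Type u) [CommRing R] [IsLocalRing R] [IsNoetherianRing R]
    (p : ℕ) [Fact p.Prime] [CharP R p]
    (hFR : FRational R p) (hCM : IsCMLocal R)
    (t : ℕ) (x y : Fin t → R) (hx : IsSOP R x) (hy : IsSOP R y)
    (q₁ q₂ : Ideal R) (hq₁ : q₁ = Ideal.span (Set.range x))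
    (hq₂ : q₂ = Ideal.span (Set.range y)) (hle : q₁ ≤ q₂) :
    tcl R p (q₁ * q₂) = q₁ * q₂ := by
  classical
  haveI : ExpChar R p := ExpChar.prime Fact.out
  obtain ⟨hxm, hxdim⟩ := hx
  obtain ⟨hym, hydim⟩ := hy
  subst hq₁
  subst hq₂
  set q₁ := Ideal.span (Set.range x) with hq₁def
  set q₂ := Ideal.span (Set.range y) with hq₂def
  have hq1m : q₁ ≤ maximalIdeal R := by
    rw [hq₁def, Ideal.span_le]; rintro _ ⟨i, rfl⟩; exact hxm i
  have hq1ne : q₁ ≠ ⊤ := fun h =>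
    (IsLocalRing.maximalIdeal.isMaximal R).ne_top (top_le_iff.mp (h ▸ hq1m))
  -- trivial inclusion
  refine le_antisymm ?_ (St11Aux.le_tcl R p _)
  rw [tcl, Ideal.span_le]
  rintro α ⟨c, hc, N, hN⟩
  show α ∈ q₁ * q₂
  -- case distinction on the dimension of R/q₁
  have hcases : ringKrullDim (R ⧸ q₁) = ⊤ ∨
      ∃ n : ℕ, ringKrullDim (R ⧸ q₁) = ((n : ℕ) : WithBot (WithTop ℕ)) := by
    haveI : Nontrivial (R ⧸ q₁) := Ideal.Quotient.nontrivial_iff.mpr hq1ne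
    have h0 : (0 : WithBot (WithTop ℕ)) ≤ ringKrullDim (R ⧸ q₁) :=
      ringKrullDim_nonneg_of_nontrivial
    have hnb : ringKrullDim (R ⧸ q₁) ≠ ⊥ := by
      intro h
      rw [h] at h0
      exact absurd h0 (not_le.mpr (WithBot.bot_lt_coe 0))
    obtain ⟨E, hE⟩ := WithBot.ne_bot_iff_exists.mp hnb
    by_cases hEt : E = ⊤
    · left; rw [← hE, hEt]; rfl
    · right
      obtain ⟨m, hm⟩ := WithTop.ne_top_iff_exists.mp hEt
      exact ⟨m, by rw [← hE, ← hm]; norm_cast⟩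
  rcases hcases with hTop | ⟨n, hn⟩
  · -- infinite-dimensional (degenerate) case: q₁q₂ is itself a parameter ideal
    have hdimR : ringKrullDim R = ⊤ := by
      rw [← hxdim, hTop, St11Main.top_add_natCast]
    let w : Fin (t * t) → R :=
      fun k => x (finProdFinEquiv.symm k).1 * y (finProdFinEquiv.symm k).2
    have hrange : Ideal.span (Set.range w) = q₁ * q₂ := by
      rw [hq₁def, hq₂def, Ideal.span_mul_span]
      congr 1
      have h1 : Set.range w = Set.range (fun pr : Fin t × Fin t => x pr.1 * y pr.2) := by
        ext a
        constructor
        · rintro ⟨k, rfl⟩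
          exact ⟨finProdFinEquiv.symm k, rfl⟩
        · rintro ⟨pr, rfl⟩
          refine ⟨finProdFinEquiv pr, ?_⟩
          show x (finProdFinEquiv.symm (finProdFinEquiv pr)).1
              * y (finProdFinEquiv.symm (finProdFinEquiv pr)).2 = _
          rw [Equiv.symm_apply_apply]
      rw [h1]
      ext a
      constructor
      · rintro ⟨⟨i, j⟩, rfl⟩
        exact Set.mem_mul.mpr ⟨_, ⟨i, rfl⟩, _, ⟨j, rfl⟩, rfl⟩
      · intro haa
        simp only [Set.mem_mul] at haa
        obtain ⟨u, ⟨i, rfl⟩, b, ⟨j, rfl⟩, rfl⟩ := haa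
        exact ⟨(i, j), rfl⟩
    have hdim2 : ringKrullDim (R ⧸ (q₁ * q₂)) = ⊤ := by
      have hle' : q₁ * q₂ ≤ q₁ := Ideal.mul_le_left
      have hsurj : Function.Surjective (Ideal.Quotient.factor hle') := by
        intro b
        obtain ⟨r, rfl⟩ := Ideal.Quotient.mk_surjective b
        exact ⟨Ideal.Quotient.mk _ r, Ideal.Quotient.factor_mk _ _⟩
      have hle2 := ringKrullDim_le_of_surjective _ hsurj
      rw [hTop] at hle2
      exact top_le_iff.mp hle2
    have hsop : IsSOP R w := by
      refine ⟨fun k => Ideal.mul_mem_right _ _ (hxm _), ?_⟩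
      rw [hrange, hdim2, hdimR, St11Main.top_add_natCast]
    have := hFR (q₁ * q₂) ⟨t * t, w, hsop, hrange.symm⟩
    rw [← this]
    exact Ideal.subset_span ⟨c, hc, N, hN⟩
  · -- main case
    have hαq₁ : α ∈ q₁ := by
      have h1 : tcl R p (q₁ * q₂) ≤ tcl R p q₁ := St11Aux.tcl_mono R p Ideal.mul_le_left
      have h2 : tcl R p q₁ = q₁ := hFR q₁ ⟨t, x, ⟨hxm, hxdim⟩, hq₁def⟩
      exact h2 ▸ h1 (Ideal.subset_span ⟨c, hc, N, hN⟩)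
    obtain ⟨a, ha⟩ := (Submodule.mem_span_range_iff_exists_fun R).mp (hq₁def ▸ hαq₁)
    have hdR : ringKrullDim R = ((t + n : ℕ) : WithBot ℕ∞) := by
      rw [← hxdim, hn, Nat.add_comm]; exact (Nat.cast_add n t).symm
    obtain ⟨z, hzm, hzdim⟩ := St11Main.completion_ideal q₁ hq1m n (le_of_eq hn)
    have hppos : ∀ e : ℕ, 0 < p ^ e := fun e => pow_pos (Fact.out (p := p.Prime)).pos e
    have key : ∀ e ≥ N, ∀ i, c * (a i) ^ p ^ e ∈ fpow R q₂ (p ^ e) := by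
      intro e he
      let v : Fin t → R := fun i => x i ^ p ^ e
      have hVm : ∀ k, Fin.append v z k ∈ maximalIdeal R := by
        refine fun k => Fin.addCases
          (motive := fun k => Fin.append v z k ∈ maximalIdeal R) ?_ ?_ k
        · intro i
          rw [Fin.append_left]
          exact Ideal.pow_mem_of_mem _ (hxm i) _ (hppos e)
        · intro i
          rw [Fin.append_right]
          exact hzm i
      have hrad : ringKrullDim (R ⧸ Ideal.span (Set.range (Fin.append v z)))
          = ringKrullDim (R ⧸ (q₁ ⊔ Ideal.span (Set.range z))) := by
        apply St11Dim.dimQuot_eq_of_radical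
        · rw [St11Aux.range_append, Ideal.span_union]
          refine sup_le ?_ ?_
          · rw [Ideal.span_le]
            rintro _ ⟨i, rfl⟩
            have hxiq : x i ∈ q₁ := Ideal.subset_span ⟨i, rfl⟩
            exact Ideal.le_radical (Ideal.mem_sup_left
              (Ideal.pow_mem_of_mem _ hxiq _ (hppos e)))
          · rw [Ideal.span_le]
            rintro _ ⟨i, rfl⟩
            exact Ideal.le_radical (Ideal.mem_sup_right (Ideal.subset_span ⟨i, rfl⟩))
        · refine sup_le ?_ ?_
          · rw [hq₁def, Ideal.span_le]
            rintro _ ⟨i, rfl⟩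
            exact Ideal.mem_radical_iff.mpr
              ⟨p ^ e, Ideal.subset_span ⟨Fin.castAdd n i, Fin.append_left v z i⟩⟩
          · rw [Ideal.span_le]
            rintro _ ⟨i, rfl⟩
            exact Ideal.le_radical (Ideal.subset_span ⟨Fin.natAdd t i, Fin.append_right v z i⟩)
      have hnt : Nontrivial (R ⧸ Ideal.span (Set.range (Fin.append v z))) := by
        refine Ideal.Quotient.nontrivial_iff.mpr fun hcon => ?_
        have hle3 : Ideal.span (Set.range (Fin.append v z)) ≤ maximalIdeal R := by
          rw [Ideal.span_le]; rintro _ ⟨k, rfl⟩; exact hVm k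
        exact (IsLocalRing.maximalIdeal.isMaximal R).ne_top (top_le_iff.mp (hcon ▸ hle3))
      have h0 : ringKrullDim (R ⧸ Ideal.span (Set.range (Fin.append v z))) = 0 := by
        refine le_antisymm (hrad ▸ hzdim) ?_
        exact ringKrullDim_nonneg_of_nontrivial
      have hfull : IsFullSOP R (Fin.append v z) := by
        refine ⟨⟨hVm, ?_⟩, hdR.symm⟩
        rw [h0, zero_add]
        exact hdR.symm
      have hreg := hCM _ _ hfull
      have hpre : St11Aux.PrefixReg v :=
        St11Aux.prefixReg_prefix (St11Aux.prefixReg_of_isRegular _ hreg)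
      have hsum : c * α ^ p ^ e = ∑ i, (c * a i ^ p ^ e) * v i := by
        rw [← ha, sum_pow_char_pow, Finset.mul_sum]
        refine Finset.sum_congr rfl fun i _ => ?_
        have : (a i • x i) ^ p ^ e = a i ^ p ^ e * x i ^ p ^ e := by
          rw [smul_eq_mul, mul_pow]
        rw [this]
        show c * (a i ^ p ^ e * x i ^ p ^ e) = c * a i ^ p ^ e * x i ^ p ^ e
        ring
      have hmem : (∑ i, (c * a i ^ p ^ e) * v i)
          ∈ fpow R q₂ (p ^ e) * Ideal.span (Set.range v) := by
        rw [← hsum]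
        have h2 : fpow R (q₁ * q₂) (p ^ e)
            ≤ fpow R q₂ (p ^ e) * Ideal.span (Set.range v) := by
          rw [hq₁def, hq₂def, Ideal.span_mul_span]
          refine le_trans (St11Aux.fpow_span_le _ _) ?_
          rw [Ideal.span_le]
          rintro _ ⟨s, hs, rfl⟩
          simp only [Set.mem_mul] at hs
          obtain ⟨u, ⟨i, rfl⟩, b, ⟨j, rfl⟩, rfl⟩ := hs
          show (x i * y j) ^ p ^ e ∈ fpow R q₂ (p ^ e) * Ideal.span (Set.range v)
          rw [mul_pow]
          have hxmem : x i ^ p ^ e ∈ Ideal.span (Set.range v) := Ideal.subset_span ⟨i, rfl⟩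
          have hyq : y j ∈ q₂ := Ideal.subset_span ⟨j, rfl⟩
          have hymem : y j ^ p ^ e ∈ fpow R q₂ (p ^ e) :=
            St11Aux.pow_mem_fpow R hyq _
          rw [mul_comm (x i ^ p ^ e) (y j ^ p ^ e)]
          exact Submodule.mul_mem_mul hymem hxmem
        exact h2 (hN e he)
      intro i
      exact St11Aux.coeff_mem_of_sum_mem hpre
        (fun i => St11Aux.pow_mem_fpow R (hle (Ideal.subset_span ⟨i, rfl⟩ : x i ∈ q₁)) _)
        hmem i
    have haq₂ : ∀ i, a i ∈ q₂ := by
      intro i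
      have hmem : a i ∈ tcl R p q₂ :=
        Ideal.subset_span ⟨c, hc, N, fun e he => key e he i⟩
      rwa [hFR q₂ ⟨t, y, ⟨hym, hydim⟩, hq₂def⟩] at hmem
    rw [← ha]
    refine Ideal.sum_mem _ fun i _ => ?_
    have : a i • x i = x i * a i := by rw [smul_eq_mul, mul_comm]
    rw [this]
    exact Submodule.mul_mem_mul (Ideal.subset_span ⟨i, rfl⟩) (haq₂ i)
end
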